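/- Let N be a positive integer and v a nonzero complex number with v^N = −1. Then for every integer m and all integers j, l with 1 ≤ j ≤ N−1 and 0 ≤ l ≤ N−1, one has D_m(N−j, l) + D_m(j, l) = (mN/2) · S(j−l, j+l). -/

import Mathlib

open Complex

/-- `{n} = v^n - v^{-n}` for a nonzero complex number `v`. -/
noncomputable def brv (v : ℂ) (n : ℤ) : ℂ := v ^ n - v ^ (-n)

/-- `S(k,l) = ∏_{k ≤ r ≤ l} {r}`. -/
noncomputable def SSv (v : ℂ) (k l : ℤ) : ℂ := ∏ r ∈ Finset.Icc k l, brv v r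

/-- `A(j,k) = {j-k}{j+k}`. -/
noncomputable def AAv (v : ℂ) (j k : ℤ) : ℂ := brv v (j - k) * brv v (j + k)

/-- `D_m(j,l)` from the context. -/
noncomputable def DDv (v : ℂ) (m j : ℤ) (l : ℕ) : ℂ :=
  (v ^ j + v ^ (-j)) *
      ((∏ k ∈ Finset.Icc 1 l, AAv v j (k : ℤ)) +
        2 * (brv v j) ^ 2 *
          ∑ k ∈ Finset.Icc 1 l, ∏ k' ∈ (Finset.Icc 1 l).erase k, AAv v j (k' : ℤ)) +
    ((m : ℂ) * (j : ℂ) / 2) * brv v j * ∏ k ∈ Finset.Icc 1 l, AAv v j (k : ℤ)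

lemma brv_sub_N (N : ℕ) (v : ℂ) (hv : v ≠ 0) (hvN : v ^ N = -1) (a : ℤ) :
    brv v ((N : ℤ) - a) = brv v a := by
  have hN' : v ^ (N : ℤ) = -1 := by rw [zpow_natCast]; exact hvN
  have ha : v ^ a ≠ 0 := zpow_ne_zero a hv
  unfold brv
  rw [neg_sub, zpow_sub₀ hv, zpow_sub₀ hv, hN', zpow_neg]
  field_simp
  ring

lemma AAv_sub_N (N : ℕ) (v : ℂ) (hv : v ≠ 0) (hvN : v ^ N = -1) (j k : ℤ) :
    AAv v ((N : ℤ) - j) k = AAv v j k := by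
  unfold AAv
  have h1 : (N : ℤ) - j - k = (N : ℤ) - (j + k) := by ring
  have h2 : (N : ℤ) - j + k = (N : ℤ) - (j - k) := by ring
  rw [h1, h2, brv_sub_N N v hv hvN, brv_sub_N N v hv hvN]
  ring

lemma brv_mul_prod (v : ℂ) (j : ℤ) (l : ℕ) :
    brv v j * ∏ k ∈ Finset.Icc 1 l, AAv v j (k : ℤ) =
      SSv v (j - (l : ℤ)) (j + (l : ℤ)) := by
  induction l with
  | zero => simp [SSv]
  | succ n ih =>
    rw [Finset.prod_Icc_succ_top (by omega : 1 ≤ n + 1), ← mul_assoc, ih]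
    have htop : (Finset.Icc (j - (↑(n+1) : ℤ)) (j + ↑(n+1))) =
        insert (j - (↑(n+1) : ℤ)) (insert (j + ↑(n+1)) (Finset.Icc (j - n) (j + n))) := by
      ext x
      simp only [Finset.mem_Icc, Finset.mem_insert]
      push_cast
      omega
    unfold SSv
    rw [htop, Finset.prod_insert, Finset.prod_insert]
    · unfold AAv
      push_cast
      ring
    · simp only [Finset.mem_Icc]; omega
    · simp only [Finset.mem_insert, Finset.mem_Icc]; push_cast; omega

/-- If `v^N = -1`, then `D_m(N-j,l) + D_m(j,l) = (mN/2) S(j-l,j+l)` for all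
`1 ≤ j ≤ N-1` and `0 ≤ l ≤ N-1`. -/
theorem D_add_D_eq (N : ℕ) (hN : 0 < N) (v : ℂ) (hv : v ≠ 0) (hvN : v ^ N = -1)
    (m : ℤ) (j l : ℕ) (hj1 : 1 ≤ j) (hj2 : j ≤ N - 1) (hl : l ≤ N - 1) :
    DDv v m ((N : ℤ) - (j : ℤ)) l + DDv v m (j : ℤ) l =
      ((m : ℂ) * (N : ℂ) / 2) * SSv v ((j : ℤ) - (l : ℤ)) ((j : ℤ) + (l : ℤ)) := by
  have hN' : v ^ (N : ℤ) = -1 := by rw [zpow_natCast]; exact hvN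
  have hpow : v ^ ((N : ℤ) - (j : ℤ)) + v ^ (-((N : ℤ) - (j : ℤ))) =
      -(v ^ (j : ℤ) + v ^ (-(j : ℤ))) := by
    have ha : v ^ (j : ℤ) ≠ 0 := zpow_ne_zero _ hv
    rw [neg_sub, zpow_sub₀ hv, zpow_sub₀ hv, hN', zpow_neg]
    field_simp
    ring
  have hS := brv_mul_prod v (j : ℤ) l
  simp only [DDv, AAv_sub_N N v hv hvN, brv_sub_N N v hv hvN, hpow]
  push_cast
  linear_combination ((m : ℂ) * N / 2) * hS
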